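/- Let â : ℤ² → ℂ be absolutely summable. Then Σ_{(n1,n2,n3,n4)∈(ℤ²)⁴ : n1−n2+n3−n4=0, |n1|²−|n2|²+|n3|²−|n4|²=0} â(n1)·conj(â(n2))·â(n3)·conj(â(n4)) = Σ_{n∈ℤ²} Σ_{k∈ℤ} | Σ_{n1,n3∈ℤ² : n1+n3=n, |n1|²+|n3|²=k} â(n1)·â(n3) |². In particular this quadrilinear sum is a nonnegative real number, and consequently the Hamiltonian H_0 = Σ_{n∈ℤ²} |n|²|â(n)|² + (1/2)·(this quadrilinear sum) of the resonant system satisfies H_0 ≥ Σ_{n∈ℤ²} |n|² |â(n)|². -/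

import Mathlib

open scoped BigOperators ENNReal NNReal
open Complex

noncomputable section

/-- Frequencies in `ℤ²`. -/
abbrev Z2 : Type := ℤ × ℤ

/-- Squared Euclidean norm `|n|²` on `ℤ²`. -/
def sq2 (n : Z2) : ℤ := n.1 ^ 2 + n.2 ^ 2

/-- Euclidean dot product on `ℤ²`. -/
def dot2 (m n : Z2) : ℤ := m.1 * n.1 + m.2 * n.2

/-- The resonance factor `ω₄ = |n1|² - |n2|² + |n3|² - |n4|²`. -/
def omega4 (n1 n2 n3 n4 : Z2) : ℤ := sq2 n1 - sq2 n2 + sq2 n3 - sq2 n4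

/-- Right-hand side (already multiplied by `i`, i.e. `a_n' = i·(…)`) of the FNLS system
`-i a_n' = -|a_n|² a_n + Σ_{Γ(n)} a_{n1} conj(a_{n2}) a_{n3} e^{i ω₄ t}`. -/
def fnlsRHS (a : Z2 → ℂ) (n : Z2) (t : ℝ) : ℂ :=
  Complex.I * (-((‖a n‖ : ℂ) ^ 2) * a n +
    ∑' p : Z2 × Z2 × Z2,
      if p.1 - p.2.1 + p.2.2 = n ∧ p.1 ≠ n ∧ p.2.2 ≠ n then
        a p.1 * (starRingEnd ℂ) (a p.2.1) * a p.2.2 *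
          Complex.exp (Complex.I * ((omega4 p.1 p.2.1 p.2.2 n : ℤ) : ℂ) * (t : ℂ))
      else 0)

/-- Right-hand side of the `R`-truncated system (interactions with `|ω₄| ≤ R` only). -/
def truncRHS (R : ℕ) (a : Z2 → ℂ) (n : Z2) (t : ℝ) : ℂ :=
  Complex.I * (-((‖a n‖ : ℂ) ^ 2) * a n +
    ∑' p : Z2 × Z2 × Z2,
      if p.1 - p.2.1 + p.2.2 = n ∧ p.1 ≠ n ∧ p.2.2 ≠ n ∧
          |omega4 p.1 p.2.1 p.2.2 n| ≤ (R : ℤ) then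
        a p.1 * (starRingEnd ℂ) (a p.2.1) * a p.2.2 *
          Complex.exp (Complex.I * ((omega4 p.1 p.2.1 p.2.2 n : ℤ) : ℂ) * (t : ℂ))
      else 0)

/-- Right-hand side of the resonant system RFNLS (only `ω₄ = 0` interactions, no phases). -/
def resRHS (a : Z2 → ℂ) (n : Z2) : ℂ :=
  Complex.I * (-((‖a n‖ : ℂ) ^ 2) * a n +
    ∑' p : Z2 × Z2 × Z2,
      if p.1 - p.2.1 + p.2.2 = n ∧ p.1 ≠ n ∧ p.2.2 ≠ n ∧
          omega4 p.1 p.2.1 p.2.2 n = 0 then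
        a p.1 * (starRingEnd ℂ) (a p.2.1) * a p.2.2
      else 0)

/-- `a` is a solution of the FNLS system on the set `I`: absolutely summable values,
locally bounded `ℓ¹` norm, and coordinatewise differentiable satisfying the equation. -/
def IsFNLSSolution (I : Set ℝ) (a : ℝ → Z2 → ℂ) : Prop :=
  (∀ t ∈ I, Summable fun n : Z2 => ‖a t n‖) ∧
  (∀ t1 ∈ I, ∀ t2 ∈ I, ∃ C : ℝ, ∀ t ∈ Set.Icc t1 t2 ∩ I, (∑' n : Z2, ‖a t n‖) ≤ C) ∧
  (∀ n : Z2, ∀ t ∈ I, HasDerivWithinAt (fun τ => a τ n) (fnlsRHS (a t) n t) I t)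

/-- `a` is a solution of the `R`-truncated system on `I`. -/
def IsTruncSolution (R : ℕ) (I : Set ℝ) (a : ℝ → Z2 → ℂ) : Prop :=
  (∀ t ∈ I, Summable fun n : Z2 => ‖a t n‖) ∧
  (∀ t1 ∈ I, ∀ t2 ∈ I, ∃ C : ℝ, ∀ t ∈ Set.Icc t1 t2 ∩ I, (∑' n : Z2, ‖a t n‖) ≤ C) ∧
  (∀ n : Z2, ∀ t ∈ I, HasDerivWithinAt (fun τ => a τ n) (truncRHS R (a t) n t) I t)

/-- `a` is a solution of the resonant system RFNLS on `I`. -/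
def IsRFNLSSolution (I : Set ℝ) (a : ℝ → Z2 → ℂ) : Prop :=
  (∀ t ∈ I, Summable fun n : Z2 => ‖a t n‖) ∧
  (∀ t1 ∈ I, ∀ t2 ∈ I, ∃ C : ℝ, ∀ t ∈ Set.Icc t1 t2 ∩ I, (∑' n : Z2, ‖a t n‖) ≤ C) ∧
  (∀ n : Z2, ∀ t ∈ I, HasDerivWithinAt (fun τ => a τ n) (resRHS (a t) n) I t)

/-- The square of the `h^s` norm `Σ (1+|n|²)^s |a_n|²`, valued in `ℝ≥0∞`. -/
def hsNormSqE (s : ℝ) (a : Z2 → ℂ) : ℝ≥0∞ :=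
  ∑' n : Z2, ENNReal.ofReal ((1 + (sq2 n : ℝ)) ^ s * ‖a n‖ ^ 2)

/-- The toy system with `P` modes `b_1, …, b_P`, with the convention `b_0 = b_{P+1} = 0`. -/
def IsToySolution (P : ℕ) (I : Set ℝ) (b : ℝ → ℕ → ℂ) : Prop :=
  (∀ t ∈ I, b t 0 = 0) ∧
  (∀ t ∈ I, ∀ j : ℕ, P < j → b t j = 0) ∧
  (∀ j : ℕ, 1 ≤ j → j ≤ P → ∀ t ∈ I,
    HasDerivWithinAt (fun τ => b τ j)
      (Complex.I * (-((‖b t j‖ : ℂ) ^ 2) * b t j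
        + 2 * (b t (j + 1)) ^ 2 * (starRingEnd ℂ) (b t j)
        + 2 * (b t (j - 1)) ^ 2 * (starRingEnd ℂ) (b t j))) I t)

/-- `S` satisfies the `R`-closure condition. -/
def RClosed (R : ℕ) (S : Set Z2) : Prop :=
  ∀ n1 n2 n3 : Z2, n1 ∈ S → n2 ∈ S → n3 ∈ S →
    |omega4 n1 n2 n3 (n1 - n2 + n3)| ≤ (R : ℤ) → n1 - n2 + n3 ∈ S

/-- A rectangle in `ℤ²`: a quadruple of distinct points forming a parallelogram
(`n1 + n3 = n2 + n4`) with `ω₄ = 0`. -/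
def IsRectangle (n1 n2 n3 n4 : Z2) : Prop :=
  n1 ≠ n2 ∧ n1 ≠ n3 ∧ n1 ≠ n4 ∧ n2 ≠ n3 ∧ n2 ≠ n4 ∧ n3 ≠ n4 ∧
  n1 + n3 = n2 + n4 ∧ sq2 n1 + sq2 n3 = sq2 n2 + sq2 n4

/-- Closure under completing rectangles: if three vertices of a rectangle lie in `S`,
then so does the fourth. -/
def RectClosed (S : Set Z2) : Prop :=
  ∀ n1 n2 n3 n4 : Z2, IsRectangle n1 n2 n3 n4 → n1 ∈ S → n2 ∈ S → n3 ∈ S → n4 ∈ S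

/-- A nuclear family: a rectangle with parents `n1, n3` in generation `Λ j` and
children `n2, n4` in generation `Λ (j+1)`. -/
def IsNuclearFamily (Λ : ℕ → Finset Z2) (j : ℕ) (n1 n2 n3 n4 : Z2) : Prop :=
  IsRectangle n1 n2 n3 n4 ∧ n1 ∈ Λ j ∧ n3 ∈ Λ j ∧ n2 ∈ Λ (j + 1) ∧ n4 ∈ Λ (j + 1)

/-- Existence and uniqueness (up to trivial permutations) of spouse and children. -/
def SpouseChildren (Λ : ℕ → Finset Z2) (P : ℕ) : Prop :=
  ∀ j : ℕ, 1 ≤ j → j < P → ∀ n1 ∈ Λ j,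
    ∃ n3 n2 n4 : Z2, IsNuclearFamily Λ j n1 n2 n3 n4 ∧
      ∀ n3' n2' n4' : Z2, IsNuclearFamily Λ j n1 n2' n3' n4' →
        n3' = n3 ∧ ((n2' = n2 ∧ n4' = n4) ∨ (n2' = n4 ∧ n4' = n2))

/-- Existence and uniqueness (up to trivial permutations) of sibling and parents. -/
def ParentsSibling (Λ : ℕ → Finset Z2) (P : ℕ) : Prop :=
  ∀ j : ℕ, 1 ≤ j → j < P → ∀ n2 ∈ Λ (j + 1),
    ∃ n4 n1 n3 : Z2, IsNuclearFamily Λ j n1 n2 n3 n4 ∧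
      ∀ n1' n3' n4' : Z2, IsNuclearFamily Λ j n1' n2 n3' n4' →
        n4' = n4 ∧ ((n1' = n1 ∧ n3' = n3) ∨ (n1' = n3 ∧ n3' = n1))

/-- Non-degeneracy: the sibling of a frequency is never equal to its spouse. -/
def NonDegenerate (Λ : ℕ → Finset Z2) : Prop :=
  ∀ j : ℕ, ∀ n1 n2 n3 n4 m2 m3 m4 : Z2,
    IsNuclearFamily Λ j n1 n2 n3 n4 → IsNuclearFamily Λ (j + 1) n2 m2 m3 m4 → m3 ≠ n4

/-- The union `Λ_1 ∪ … ∪ Λ_P` of all generations. -/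
def genFinset (Λ : ℕ → Finset Z2) (P : ℕ) : Finset Z2 := (Finset.Icc 1 P).biUnion Λ

/-- Faithfulness: the only rectangles in `Λ` are (permutations of) nuclear families. -/
def FaithfulGen (Λ : ℕ → Finset Z2) (P : ℕ) : Prop :=
  ∀ n1 n2 n3 n4 : Z2,
    n1 ∈ genFinset Λ P → n2 ∈ genFinset Λ P → n3 ∈ genFinset Λ P → n4 ∈ genFinset Λ P →
    IsRectangle n1 n2 n3 n4 →
    ∃ j : ℕ, 1 ≤ j ∧ j < P ∧
      ((n1 ∈ Λ j ∧ n3 ∈ Λ j ∧ n2 ∈ Λ (j + 1) ∧ n4 ∈ Λ (j + 1)) ∨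
       (n2 ∈ Λ j ∧ n4 ∈ Λ j ∧ n1 ∈ Λ (j + 1) ∧ n3 ∈ Λ (j + 1)))

/-- `S` contains at most one vertex of any rectangle having a vertex at `0`. -/
def NoRectangleWithZero (S : Set Z2) : Prop :=
  ∀ m2 m3 m4 : Z2, IsRectangle 0 m2 m3 m4 →
    ¬(m2 ∈ S ∧ m3 ∈ S) ∧ ¬(m2 ∈ S ∧ m4 ∈ S) ∧ ¬(m3 ∈ S ∧ m4 ∈ S)

/-- `S1` and `S2` are not connected by any (nondegenerate) parallelogram of
eccentricity `≤ R`. -/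
def NotConnected (R : ℕ) (S1 S2 : Set Z2) : Prop :=
  ∀ n1 n2 n3 : Z2,
    ((n1 ∈ S1 ∧ n2 ∈ S1 ∧ n3 ∈ S2) ∨ (n1 ∈ S2 ∧ n2 ∈ S2 ∧ n3 ∈ S1)) →
    (n1 ≠ n2 → n2 ≠ n3 → (R : ℤ) < |omega4 n1 n2 n3 (n1 - n2 + n3)|) ∧
    (n1 ≠ n3 → n3 ≠ n2 → (R : ℤ) < |omega4 n1 n3 n2 (n1 - n3 + n2)|)

/-- A well-posed continuous dynamical system on a normed space `X`. -/
def IsWellPosedFlow {X : Type*} [NormedAddCommGroup X] (S : ℝ → X → X) : Prop :=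
  (∀ x : X, S 0 x = x) ∧
  (∀ t1 t2 : ℝ, ∀ x : X, S (t1 + t2) x = S t1 (S t2 x)) ∧
  (∀ x : X, Continuous fun t : ℝ => S t x) ∧
  (∀ T : ℝ, 0 < T → ∀ x : X, ∀ ε : ℝ, 0 < ε → ∃ δ : ℝ, 0 < δ ∧ ∀ y : X, ‖x - y‖ ≤ δ →
     ∀ t ∈ Set.Icc (-T) T, ‖S t x - S t y‖ ≤ ε)

/-- `sup_{t > 0} ‖S(t)x‖`, valued in `ℝ≥0∞`. -/
def supOrbitPos {X : Type*} [NormedAddCommGroup X] (S : ℝ → X → X) (x : X) : ℝ≥0∞ :=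
  ⨆ t : Set.Ioi (0 : ℝ), (‖S (t : ℝ) x‖₊ : ℝ≥0∞)

/-- `sup_{t ∈ ℝ} ‖S(t)x‖`, valued in `ℝ≥0∞`. -/
def supOrbitAll {X : Type*} [NormedAddCommGroup X] (S : ℝ → X → X) (x : X) : ℝ≥0∞ :=
  ⨆ t : ℝ, (‖S t x‖₊ : ℝ≥0∞)

/-- Long-time strong instability of the flow `S` near `φ`. -/
def LongTimeStrongInstability {X : Type*} [NormedAddCommGroup X]
    (S : ℝ → X → X) (φ : X) : Prop :=
  ∀ δ : ℝ, 0 < δ → δ < 1 → ∀ K : ℝ, 1 ≤ K →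
    ∃ φs : X, ‖φ - φs‖ ≤ δ ∧ ENNReal.ofReal K ≤ supOrbitPos S φs

/-- Auxiliary: rearrangement equiv for quadruples. -/
def pairEquiv4 : (Z2 × Z2 × Z2 × Z2) ≃ (Z2 × Z2) × (Z2 × Z2) :=
  ⟨fun q => ((q.1, q.2.2.1), (q.2.1, q.2.2.2)),
   fun r => (r.1.1, r.2.1, r.1.2, r.2.2), fun _ => rfl, fun _ => rfl⟩

lemma sub_add_sub_eq_zero_iff' {α : Type*} [AddCommGroup α] (x y z w : α) :
    x - y + z - w = 0 ↔ x + z = y + w := by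
  rw [sub_eq_zero, sub_add_eq_add_sub, sub_eq_iff_eq_add, add_comm y w]

/-- For absolutely summable `â : ℤ² → ℂ`, the resonant quadrilinear
sum equals `Σ_{n,k} |Σ_{n1+n3=n, |n1|²+|n3|²=k} â(n1)â(n3)|²`; in particular it is a
nonnegative real number, and the Hamiltonian `H₀` of the resonant system dominates
`Σ |n|²|â(n)|²`. -/
theorem resonant_hamiltonian_positive
    (a : Z2 → ℂ) (ha : Summable fun n : Z2 => ‖a n‖) :
    (∑' q : Z2 × Z2 × Z2 × Z2,
        if q.1 - q.2.1 + q.2.2.1 - q.2.2.2 = 0 ∧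
            sq2 q.1 - sq2 q.2.1 + sq2 q.2.2.1 - sq2 q.2.2.2 = 0 then
          a q.1 * (starRingEnd ℂ) (a q.2.1) * a q.2.2.1 * (starRingEnd ℂ) (a q.2.2.2)
        else 0) =
      ((∑' n : Z2, ∑' k : ℤ,
          ‖∑' p : Z2 × Z2, if p.1 + p.2 = n ∧ sq2 p.1 + sq2 p.2 = k then
            a p.1 * a p.2 else 0‖ ^ 2 : ℝ) : ℂ) ∧
    (0 : ℝ) ≤ (∑' n : Z2, ∑' k : ℤ,
        ‖∑' p : Z2 × Z2, if p.1 + p.2 = n ∧ sq2 p.1 + sq2 p.2 = k then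
          a p.1 * a p.2 else 0‖ ^ 2) ∧
    (∑' n : Z2, (sq2 n : ℝ) * ‖a n‖ ^ 2) ≤
      (∑' n : Z2, (sq2 n : ℝ) * ‖a n‖ ^ 2) +
        (1 / 2) * (∑' n : Z2, ∑' k : ℤ,
          ‖∑' p : Z2 × Z2, if p.1 + p.2 = n ∧ sq2 p.1 + sq2 p.2 = k then
            a p.1 * a p.2 else 0‖ ^ 2) := by
  classical
  set F : Z2 × Z2 → ℂ := fun p => a p.1 * a p.2 with hFdef
  set κ : Z2 × Z2 → Z2 × ℤ := fun p => (p.1 + p.2, sq2 p.1 + sq2 p.2) with hκdef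
  set T : Z2 × ℤ → ℂ := fun c => ∑' p : Z2 × Z2, if κ p = c then F p else 0 with hTdef
  have hFnorm : Summable fun p : Z2 × Z2 => ‖F p‖ := by
    have := ha.mul_of_nonneg ha (fun n => norm_nonneg _) (fun n => norm_nonneg _)
    simpa [hFdef, norm_mul] using this
  have hF : Summable F := hFnorm.of_norm
  set M : ℝ := ∑' p : Z2 × Z2, ‖F p‖ with hMdef
  have hfibN : ∀ c, Summable fun p : Z2 × Z2 => if κ p = c then ‖F p‖ else 0 := by
    intro c
    refine Summable.of_nonneg_of_le (fun p => ?_) (fun p => ?_) hFnorm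
    · split <;> simp [norm_nonneg]
    · split <;> simp [norm_nonneg]
  have hfibnorm : ∀ c, (fun p : Z2 × Z2 => ‖if κ p = c then F p else 0‖)
      = fun p => if κ p = c then ‖F p‖ else 0 := by
    intro c; funext p; split <;> simp
  have hfib : ∀ c, Summable fun p : Z2 × Z2 => if κ p = c then F p else 0 := by
    intro c
    refine Summable.of_norm ?_
    rw [hfibnorm c]; exact hfibN c
  have hTle : ∀ c, ‖T c‖ ≤ ∑' p : Z2 × Z2, (if κ p = c then ‖F p‖ else 0) := by
    intro c
    calc ‖T c‖ ≤ ∑' p : Z2 × Z2, ‖if κ p = c then F p else 0‖ :=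
          norm_tsum_le_tsum_norm (by rw [hfibnorm c]; exact hfibN c)
      _ = _ := by rw [hfibnorm c]
  have hTleM : ∀ c, ‖T c‖ ≤ M := by
    intro c
    refine (hTle c).trans (Summable.tsum_le_tsum (fun p => ?_) (hfibN c) hFnorm)
    split <;> simp [norm_nonneg]
  -- the grouping injection
  set ι : Z2 × Z2 → (Z2 × ℤ) × (Z2 × Z2) := fun p => (κ p, p) with hιdef
  have hι : Function.Injective ι := by
    intro p q h
    exact (Prod.ext_iff.1 h).2
  -- grouping lemma
  have key : ∀ H : Z2 × Z2 → ℂ, Summable H →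
      ∑' p : Z2 × Z2, H p
        = ∑' c : Z2 × ℤ, ∑' p : Z2 × Z2, (if κ p = c then H p else 0) := by
    intro H hH
    set J : (Z2 × ℤ) × (Z2 × Z2) → ℂ := fun x => if κ x.2 = x.1 then H x.2 else 0 with hJ
    have hsupp : Function.support J ⊆ Set.range ι := by
      intro x hx
      have hx' : κ x.2 = x.1 := by
        by_contra h; exact hx (by simp [hJ, h])
      exact ⟨x.2, by simp [hιdef, hx', Prod.ext_iff]⟩
    have hzero : ∀ x ∉ Set.range ι, J x = 0 := by
      intro x hx
      by_contra h
      exact hx (hsupp h)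
    have hcomp : (J ∘ ι) = H := by
      funext p; simp [hJ, hιdef]
    have hJsum : Summable J := by
      rw [← hι.summable_iff hzero, hcomp]; exact hH
    have h1 : ∑' p : Z2 × Z2, H p = ∑' x : (Z2 × ℤ) × (Z2 × Z2), J x := by
      rw [← hι.tsum_eq hsupp]
      exact tsum_congr fun p => by simp [hJ, hιdef]
    rw [h1, Summable.tsum_prod' hJsum hJsum.prod_factor]
  -- same grouping lemma for real-valued functions
  have keyR : ∀ H : Z2 × Z2 → ℝ, Summable H →
      Summable (fun c : Z2 × ℤ => ∑' p : Z2 × Z2, (if κ p = c then H p else 0)) := by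
    intro H hH
    set J : (Z2 × ℤ) × (Z2 × Z2) → ℝ := fun x => if κ x.2 = x.1 then H x.2 else 0 with hJ
    have hsupp : Function.support J ⊆ Set.range ι := by
      intro x hx
      have hx' : κ x.2 = x.1 := by
        by_contra h; exact hx (by simp [hJ, h])
      exact ⟨x.2, by simp [hιdef, hx', Prod.ext_iff]⟩
    have hzero : ∀ x ∉ Set.range ι, J x = 0 := by
      intro x hx; by_contra h; exact hx (hsupp h)
    have hcomp : (J ∘ ι) = H := by funext p; simp [hJ, hιdef]
    have hJsum : Summable J := by
      rw [← hι.summable_iff hzero, hcomp]; exact hH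
    exact ⟨_, hJsum.hasSum.prod_fiberwise fun c => (hJsum.prod_factor c).hasSum⟩
  have hTnorm : Summable fun c : Z2 × ℤ => ‖T c‖ :=
    Summable.of_nonneg_of_le (fun c => norm_nonneg _) hTle (keyR _ hFnorm)
  have hMnn : 0 ≤ M := tsum_nonneg fun p => norm_nonneg _
  have hTsq : Summable fun c : Z2 × ℤ => ‖T c‖ ^ 2 := by
    refine Summable.of_nonneg_of_le (fun c => sq_nonneg _) (fun c => ?_) (hTnorm.mul_right M)
    rw [sq]
    exact mul_le_mul_of_nonneg_left (hTleM c) (norm_nonneg _)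
  -- identify the statement's inner sums with T
  have hTst : ∀ (n : Z2) (k : ℤ),
      (∑' p : Z2 × Z2, if p.1 + p.2 = n ∧ sq2 p.1 + sq2 p.2 = k then a p.1 * a p.2 else 0)
        = T (n, k) := by
    intro n k
    refine tsum_congr fun p => ?_
    simp [hTdef, hκdef, hFdef, Prod.ext_iff]
  -- the double sum is ∑' c, ‖T c‖²
  have hdouble : (∑' n : Z2, ∑' k : ℤ,
      ‖∑' p : Z2 × Z2, if p.1 + p.2 = n ∧ sq2 p.1 + sq2 p.2 = k then
        a p.1 * a p.2 else 0‖ ^ 2) = ∑' c : Z2 × ℤ, ‖T c‖ ^ 2 := by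
    rw [Summable.tsum_prod' hTsq fun n => hTsq.prod_factor n]
    exact tsum_congr fun n => tsum_congr fun k => by rw [hTst n k]
  -- the main identity
  have main : (∑' q : Z2 × Z2 × Z2 × Z2,
        if q.1 - q.2.1 + q.2.2.1 - q.2.2.2 = 0 ∧
            sq2 q.1 - sq2 q.2.1 + sq2 q.2.2.1 - sq2 q.2.2.2 = 0 then
          a q.1 * (starRingEnd ℂ) (a q.2.1) * a q.2.2.1 * (starRingEnd ℂ) (a q.2.2.2)
        else 0) = ∑' c : Z2 × ℤ, T c * (starRingEnd ℂ) (T c) := by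
    set G : (Z2 × Z2) × (Z2 × Z2) → ℂ :=
      fun x => if κ x.1 = κ x.2 then F x.1 * (starRingEnd ℂ) (F x.2) else 0 with hGdef
    have hGsum : Summable G := by
      refine Summable.of_norm (Summable.of_nonneg_of_le (fun x => norm_nonneg _)
        (fun x => ?_)
        (hFnorm.mul_of_nonneg hFnorm (fun p => norm_nonneg _) (fun p => norm_nonneg _)))
      simp only [hGdef]
      split
      · simp [norm_mul]
      · simp [mul_nonneg, norm_nonneg]
    have step1 : (∑' q : Z2 × Z2 × Z2 × Z2,
        if q.1 - q.2.1 + q.2.2.1 - q.2.2.2 = 0 ∧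
            sq2 q.1 - sq2 q.2.1 + sq2 q.2.2.1 - sq2 q.2.2.2 = 0 then
          a q.1 * (starRingEnd ℂ) (a q.2.1) * a q.2.2.1 * (starRingEnd ℂ) (a q.2.2.2)
        else 0) = ∑' x : (Z2 × Z2) × (Z2 × Z2), G x := by
      rw [← pairEquiv4.tsum_eq G]
      refine tsum_congr fun q => ?_
      have hcond : (q.1 - q.2.1 + q.2.2.1 - q.2.2.2 = 0 ∧
            sq2 q.1 - sq2 q.2.1 + sq2 q.2.2.1 - sq2 q.2.2.2 = 0)
          ↔ κ (q.1, q.2.2.1) = κ (q.2.1, q.2.2.2) := by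
        simp only [hκdef, Prod.mk.injEq]
        exact and_congr (sub_add_sub_eq_zero_iff' _ _ _ _) (sub_add_sub_eq_zero_iff' _ _ _ _)
      simp only [hGdef, pairEquiv4, Equiv.coe_fn_mk]
      rw [if_congr hcond rfl rfl]
      split
      · simp only [hFdef, map_mul]; ring
      · rfl
    have step2 : ∑' x : (Z2 × Z2) × (Z2 × Z2), G x
        = ∑' p : Z2 × Z2, F p * (starRingEnd ℂ) (T (κ p)) := by
      rw [Summable.tsum_prod' hGsum hGsum.prod_factor]
      refine tsum_congr fun p => ?_
      have h1 : (fun q : Z2 × Z2 => G (p, q))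
          = fun q => F p * (starRingEnd ℂ) (if κ q = κ p then F q else 0) := by
        funext q
        simp only [hGdef]
        by_cases h : κ q = κ p
        · rw [if_pos h.symm, if_pos h]
        · rw [if_neg (fun hh => h hh.symm), if_neg h, map_zero, mul_zero]
      rw [h1, tsum_mul_left]
      congr 1
      simp only [starRingEnd_apply]
      rw [← tsum_star]
    have hHsum : Summable fun p : Z2 × Z2 => F p * (starRingEnd ℂ) (T (κ p)) := by
      refine Summable.of_norm (Summable.of_nonneg_of_le (fun p => norm_nonneg _)
        (fun p => ?_) (hFnorm.mul_right M))
      rw [norm_mul, RCLike.norm_conj]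
      exact mul_le_mul_of_nonneg_left (hTleM _) (norm_nonneg _)
    have step3 : ∑' p : Z2 × Z2, F p * (starRingEnd ℂ) (T (κ p))
        = ∑' c : Z2 × ℤ, T c * (starRingEnd ℂ) (T c) := by
      rw [key _ hHsum]
      refine tsum_congr fun c => ?_
      have h1 : (fun p : Z2 × Z2 => if κ p = c then F p * (starRingEnd ℂ) (T (κ p)) else 0)
          = fun p => (if κ p = c then F p else 0) * (starRingEnd ℂ) (T c) := by
        funext p
        by_cases h : κ p = c
        · rw [if_pos h, if_pos h, h]
        · rw [if_neg h, if_neg h, zero_mul]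
      rw [h1, tsum_mul_right]
    rw [step1, step2, step3]
  have hTconj : ∀ c : Z2 × ℤ, T c * (starRingEnd ℂ) (T c) = ((‖T c‖ ^ 2 : ℝ) : ℂ) := by
    intro c
    rw [Complex.mul_conj, Complex.normSq_eq_norm_sq]
  have part1 : (∑' q : Z2 × Z2 × Z2 × Z2,
        if q.1 - q.2.1 + q.2.2.1 - q.2.2.2 = 0 ∧
            sq2 q.1 - sq2 q.2.1 + sq2 q.2.2.1 - sq2 q.2.2.2 = 0 then
          a q.1 * (starRingEnd ℂ) (a q.2.1) * a q.2.2.1 * (starRingEnd ℂ) (a q.2.2.2)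
        else 0) =
      ((∑' n : Z2, ∑' k : ℤ,
          ‖∑' p : Z2 × Z2, if p.1 + p.2 = n ∧ sq2 p.1 + sq2 p.2 = k then
            a p.1 * a p.2 else 0‖ ^ 2 : ℝ) : ℂ) := by
    rw [main, hdouble, Complex.ofReal_tsum]
    exact tsum_congr fun c => hTconj c
  have part2 : (0 : ℝ) ≤ (∑' n : Z2, ∑' k : ℤ,
      ‖∑' p : Z2 × Z2, if p.1 + p.2 = n ∧ sq2 p.1 + sq2 p.2 = k then
        a p.1 * a p.2 else 0‖ ^ 2) :=
    tsum_nonneg fun n => tsum_nonneg fun k => sq_nonneg _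
  exact ⟨part1, part2, le_add_of_nonneg_right (by linarith)⟩

end
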